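/- Every NK-loop is a Moufang A-loop. -/

import Mathlib

universe u

class Loop (Q : Type u) extends Add Q, Zero Q where
  addLeft_bijective : ∀ a : Q, Function.Bijective (fun x => a + x)
  addRight_bijective : ∀ a : Q, Function.Bijective (fun x => x + a)
  zero_add : ∀ a : Q, 0 + a = a
  add_zero : ∀ a : Q, a + 0 = a

/-- The commutant `C(Q)` of a loop. -/
def commutant (Q : Type u) [Loop Q] : Set Q := {a | ∀ x, a + x = x + a}

/-- The Moufang center `K(Q)` of a loop. -/
def moufangCenter (Q : Type u) [Loop Q] : Set Q :=
  {a | ∀ x y, (a + a) + (x + y) = (a + x) + (a + y)}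

/-- The nucleus `N(Q)` of a loop. -/
def nucleus (Q : Type u) [Loop Q] : Set Q :=
  {a | ∀ x y, ((a + x) + y = a + (x + y)) ∧ ((x + a) + y = x + (a + y)) ∧
    ((x + y) + a = x + (y + a))}

/-- The Moufang identity. -/
def IsMoufang (Q : Type u) [Loop Q] : Prop :=
  ∀ x y z : Q, x + (y + (x + z)) = ((x + y) + x) + z

/-- The multiplication group of a loop, as a subgroup of the permutation group. -/
def mlt (Q : Type u) [Loop Q] : Subgroup (Equiv.Perm Q) :=
  Subgroup.closure
    {e : Equiv.Perm Q | (∃ a : Q, ∀ x, e x = a + x) ∨ (∃ a : Q, ∀ x, e x = x + a)}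

/-- An A-loop: every inner mapping (element of the multiplication group fixing 0)
is an automorphism. -/
def IsALoop (Q : Type u) [Loop Q] : Prop :=
  ∀ φ ∈ mlt Q, φ (0 : Q) = 0 → ∀ x y : Q, φ (x + y) = φ x + φ y

namespace NKProof

variable {Q : Type u} [Loop Q]

lemma zadd (a : Q) : 0 + a = a := Loop.zero_add a
lemma addz (a : Q) : a + 0 = a := Loop.add_zero a

lemma left_cancel {a x y : Q} (h : a + x = a + y) : x = y :=
  (Loop.addLeft_bijective a).1 h

lemma right_cancel {a x y : Q} (h : x + a = y + a) : x = y :=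
  (Loop.addRight_bijective a).1 h

lemma exists_left_div (a b : Q) : ∃ w, a + w = b := (Loop.addLeft_bijective a).2 b

/-- left translation as a permutation -/
noncomputable def LP (a : Q) : Equiv.Perm Q := Equiv.ofBijective _ (Loop.addLeft_bijective a)

@[simp] lemma LP_apply (a x : Q) : LP a x = a + x := rfl

/-- right translation as a permutation -/
noncomputable def RP (a : Q) : Equiv.Perm Q := Equiv.ofBijective _ (Loop.addRight_bijective a)

@[simp] lemma RP_apply (a x : Q) : RP a x = x + a := rfl

-- nucleus accessors
lemma nuc1 {n : Q} (h : n ∈ nucleus Q) (x y : Q) : (n + x) + y = n + (x + y) := (h x y).1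
lemma nuc2 {n : Q} (h : n ∈ nucleus Q) (x y : Q) : (x + n) + y = x + (n + y) := (h x y).2.1
lemma nuc3 {n : Q} (h : n ∈ nucleus Q) (x y : Q) : (x + y) + n = x + (y + n) := (h x y).2.2

lemma zero_mem_nuc : (0 : Q) ∈ nucleus Q := by
  intro x y
  refine ⟨?_, ?_, ?_⟩ <;> simp [zadd, addz]

lemma nuc_add {n m : Q} (hn : n ∈ nucleus Q) (hm : m ∈ nucleus Q) : n + m ∈ nucleus Q := by
  intro x y
  refine ⟨?_, ?_, ?_⟩
  · calc ((n + m) + x) + y = (n + (m + x)) + y := by rw [nuc1 hn]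
    _ = n + ((m + x) + y) := nuc1 hn _ _
    _ = n + (m + (x + y)) := by rw [nuc1 hm]
    _ = (n + m) + (x + y) := (nuc1 hn _ _).symm
  · calc (x + (n + m)) + y = ((x + n) + m) + y := by rw [nuc2 hn]
    _ = (x + n) + (m + y) := nuc2 hm _ _
    _ = x + (n + (m + y)) := nuc2 hn _ _
    _ = x + ((n + m) + y) := by rw [nuc1 hn]
  · calc (x + y) + (n + m) = ((x + y) + n) + m := (nuc2 hn _ _).symm
    _ = (x + (y + n)) + m := by rw [nuc3 hn]
    _ = x + ((y + n) + m) := nuc3 hm _ _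
    _ = x + (y + (n + m)) := by rw [nuc2 hn y m]

-- Moufang-center accessors
lemma Kid {a : Q} (h : a ∈ moufangCenter Q) (x y : Q) :
    (a + a) + (x + y) = (a + x) + (a + y) := h x y

lemma Ksq {a : Q} (h : a ∈ moufangCenter Q) (x : Q) : a + (a + x) = (a + a) + x := by
  have := h 0 x
  rw [zadd, addz] at this
  exact this.symm

lemma Kcomm {a : Q} (h : a ∈ moufangCenter Q) (y : Q) : a + y = y + a := by
  obtain ⟨x, hx⟩ := exists_left_div a y
  have h1 : (a + x) + a = (a + a) + x := by
    have := h x 0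
    rw [addz, addz] at this
    exact this.symm
  rw [← hx, h1, ← Ksq h]

lemma zero_mem_K : (0 : Q) ∈ moufangCenter Q := by
  intro x y; simp [zadd]

-- nucleus inverses
lemma nuc_inv {n : Q} (hn : n ∈ nucleus Q) :
    ∃ m ∈ nucleus Q, n + m = 0 ∧ m + n = 0 := by
  obtain ⟨m, hm⟩ := exists_left_div n 0
  have hmn : m + n = 0 := by
    apply right_cancel (a := m)
    rw [nuc2 hn, hm, addz, zadd]
  refine ⟨m, ?_, hm, hmn⟩
  intro x y
  refine ⟨?_, ?_, ?_⟩
  · apply left_cancel (a := n)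
    calc n + ((m + x) + y) = (n + (m + x)) + y := (nuc1 hn (m+x) y).symm
      _ = ((n + m) + x) + y := by rw [nuc1 hn m x]
      _ = (0 + x) + y := by rw [hm]
      _ = x + y := by rw [zadd]
      _ = 0 + (x + y) := (zadd _).symm
      _ = (n + m) + (x + y) := by rw [hm]
      _ = n + (m + (x + y)) := nuc1 hn m (x+y)
  · have hx : (x + m) + n = x := by rw [nuc3 hn x m, hmn, addz]
    calc (x + m) + y = (x + m) + (0 + y) := by rw [zadd]
      _ = (x + m) + ((n + m) + y) := by rw [hm]
      _ = (x + m) + (n + (m + y)) := by rw [nuc1 hn m y]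
      _ = ((x + m) + n) + (m + y) := (nuc2 hn (x+m) (m+y)).symm
      _ = x + (m + y) := by rw [hx]
  · have hy : (y + m) + n = y := by rw [nuc3 hn y m, hmn, addz]
    calc (x + y) + m = (x + ((y + m) + n)) + m := by rw [hy]
      _ = ((x + (y + m)) + n) + m := by rw [nuc3 hn x (y+m)]
      _ = (x + (y + m)) + (n + m) := nuc2 hn (x+(y+m)) m
      _ = x + (y + m) := by rw [hm, addz]

end NKProof
namespace NKProof

variable {Q : Type u} [Loop Q]

/-- commutant nuclear elements are in the Moufang center -/
lemma NC_K {n : Q} (hn : n ∈ nucleus Q) (hc : ∀ x, n + x = x + n) :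
    n ∈ moufangCenter Q := by
  intro x y
  calc (n + n) + (x + y) = n + (n + (x + y)) := nuc1 hn n (x+y)
    _ = n + ((x + y) + n) := by rw [hc (x+y)]
    _ = n + (x + (y + n)) := by rw [nuc3 hn x y]
    _ = n + (x + (n + y)) := by rw [← hc y]
    _ = (n + x) + (n + y) := (nuc1 hn x (n+y)).symm

/-- if a commutant element decomposes as n + t with t commutant, then n is commutant -/
lemma decomp_comm {n t : Q} (hn : n ∈ nucleus Q) (ht : ∀ x, t + x = x + t)
    (hc : ∀ x, (n + t) + x = x + (n + t)) : ∀ x, n + x = x + n := by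
  intro x
  apply right_cancel (a := t)
  calc (n + x) + t = n + (x + t) := nuc1 hn x t
    _ = n + (t + x) := by rw [ht x]
    _ = (n + t) + x := (nuc1 hn t x).symm
    _ = x + (n + t) := hc x
    _ = (x + n) + t := (nuc2 hn x t).symm

/-- sum of a commutant nuclear element and a Moufang-center element is in the Moufang center -/
lemma NK_sum_K {n k : Q} (hn : n ∈ nucleus Q) (hc : ∀ x, n + x = x + n)
    (hk : k ∈ moufangCenter Q) : n + k ∈ moufangCenter Q := by
  have hsq : (n + k) + (n + k) = (n + n) + (k + k) := by
    calc (n + k) + (n + k) = n + (k + (n + k)) := nuc1 hn k (n+k)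
      _ = n + ((k + n) + k) := by rw [nuc2 hn k k]
      _ = n + ((n + k) + k) := by rw [Kcomm hk n]
      _ = n + (n + (k + k)) := by rw [nuc1 hn k k]
      _ = (n + n) + (k + k) := (nuc1 hn n (k+k)).symm
  intro x y
  calc ((n + k) + (n + k)) + (x + y) = ((n + n) + (k + k)) + (x + y) := by rw [hsq]
    _ = (n + n) + ((k + k) + (x + y)) := nuc1 (nuc_add hn hn) (k+k) (x+y)
    _ = (n + n) + ((k + x) + (k + y)) := by rw [Kid hk x y]
    _ = (n + (k + x)) + (n + (k + y)) := Kid (NC_K hn hc) (k+x) (k+y)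
    _ = ((n + k) + x) + (n + (k + y)) := by rw [nuc1 hn k x]
    _ = ((n + k) + x) + ((n + k) + y) := by rw [nuc1 hn k y]

lemma comm_with_nuc {c₁ c₂ n : Q} (hc1 : ∀ x, c₁ + x = x + c₁) (hc2 : ∀ x, c₂ + x = x + c₂)
    (hn : n ∈ nucleus Q) : (c₁ + c₂) + n = n + (c₁ + c₂) := by
  calc (c₁ + c₂) + n = c₁ + (c₂ + n) := nuc3 hn c₁ c₂
    _ = c₁ + (n + c₂) := by rw [← hc2 n]
    _ = (c₁ + n) + c₂ := (nuc2 hn c₁ c₂).symm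
    _ = (n + c₁) + c₂ := by rw [hc1 n]
    _ = n + (c₁ + c₂) := nuc1 hn c₁ c₂

variable (hNK : ∀ a : Q, ∃ n ∈ nucleus Q, ∃ k ∈ moufangCenter Q, a = n + k)

include hNK in
lemma C_add {c₁ c₂ : Q} (hc1 : ∀ x, c₁ + x = x + c₁) (hc2 : ∀ x, c₂ + x = x + c₂) :
    ∀ x, (c₁ + c₂) + x = x + (c₁ + c₂) := by
  intro x
  obtain ⟨n, hn, k, hk, hx⟩ := hNK x
  subst hx
  calc (c₁ + c₂) + (n + k) = ((c₁ + c₂) + n) + k := (nuc2 hn (c₁+c₂) k).symm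
    _ = (n + (c₁ + c₂)) + k := by rw [comm_with_nuc hc1 hc2 hn]
    _ = n + ((c₁ + c₂) + k) := nuc1 hn (c₁+c₂) k
    _ = n + (k + (c₁ + c₂)) := by rw [← Kcomm hk (c₁+c₂)]
    _ = (n + k) + (c₁ + c₂) := (nuc1 hn k (c₁+c₂)).symm

include hNK in
lemma C_K {c : Q} (hc : ∀ x, c + x = x + c) : c ∈ moufangCenter Q := by
  obtain ⟨n, hn, k, hk, hceq⟩ := hNK c
  subst hceq
  exact NK_sum_K hn (decomp_comm hn (fun x => Kcomm hk x) hc) hk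

include hNK in
lemma K_add {k₁ k₂ : Q} (hk1 : k₁ ∈ moufangCenter Q) (hk2 : k₂ ∈ moufangCenter Q) :
    k₁ + k₂ ∈ moufangCenter Q :=
  C_K hNK (C_add hNK (fun x => Kcomm hk1 x) (fun x => Kcomm hk2 x))

include hNK in
lemma K_div {k k' w : Q} (hk : k ∈ moufangCenter Q) (hk' : k' ∈ moufangCenter Q)
    (hw : k + w = k') : w ∈ moufangCenter Q := by
  obtain ⟨n, hn, k₂, hk2, hweq⟩ := hNK w
  subst hweq
  have hdec : k' = n + (k + k₂) := by
    calc k' = k + (n + k₂) := hw.symm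
      _ = (k + n) + k₂ := (nuc2 hn k k₂).symm
      _ = (n + k) + k₂ := by rw [Kcomm hk n]
      _ = n + (k + k₂) := nuc1 hn k k₂
  have ht : k + k₂ ∈ moufangCenter Q := K_add hNK hk hk2
  have hnc : ∀ x, n + x = x + n := by
    apply decomp_comm hn (fun x => Kcomm ht x)
    intro x
    rw [← hdec]
    exact Kcomm hk' x
  exact NK_sum_K hn hnc hk2

end NKProof
namespace NKProof

section GroupLemmas
variable {G : Type*} [Group G]

/-- abstract group lemma: B commutes with A⁻¹BA -/
lemma gv (A B S D T : G)
    (e1 : S * A = A * A * B)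
    (e2 : S * B = B * B * A)
    (e3 : S * S * (A * A) = A * A * (A * A) * (B * B))
    (e4 : D * (A * A) = A * A * (A * A) * B)
    (e5 : D * B = B * B * (A * A))
    (e6 : T * S = S * S * B)
    (e7 : T * B = B * B * S) :
    B * (A⁻¹ * B * A) = (A⁻¹ * B * A) * B := by
  have hS1 : S = A * A * B * A⁻¹ := by rw [← e1]; group
  have hS2 : S = B * B * A * B⁻¹ := by rw [← e2]; group
  have hD1 : D = A * A * (A * A) * B * A⁻¹ * A⁻¹ := by rw [← e4]; group
  have hD2 : D = B * B * (A * A) * B⁻¹ := by rw [← e5]; group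
  have hSS : S * S = A * A * (A * A) * (B * B) * A⁻¹ * A⁻¹ := by rw [← e3]; group
  have hT1 : T = S * S * B * S⁻¹ := by rw [← e6]; group
  have hT2 : T = B * B * S * B⁻¹ := by rw [← e7]; group
  have g1 : A * A * B * A⁻¹ = B * B * A * B⁻¹ := hS1.symm.trans hS2
  have g2 : A * A * (A * A) * B * A⁻¹ * A⁻¹ = B * B * (A * A) * B⁻¹ := hD1.symm.trans hD2
  have h1 : A * A * B * A⁻¹ * B = B * B * A := by rw [g1]; group
  have h2 : A * A * (A * A) * B * A⁻¹ * A⁻¹ * B = B * B * (A * A) := by rw [g2]; group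
  have hiii : B * A⁻¹ * B * A = A * A * B * A⁻¹ * A⁻¹ * B := by
    apply mul_left_cancel (a := A * A)
    calc A * A * (B * A⁻¹ * B * A) = (A * A * B * A⁻¹ * B) * A := by group
      _ = (B * B * A) * A := by rw [h1]
      _ = B * B * (A * A) := by group
      _ = A * A * (A * A) * B * A⁻¹ * A⁻¹ * B := h2.symm
      _ = A * A * (A * A * B * A⁻¹ * A⁻¹ * B) := by group
  have g4 : S * S * B * S⁻¹ = B * B * S * B⁻¹ := hT1.symm.trans hT2
  have hSinv : S⁻¹ = B * A⁻¹ * B⁻¹ * B⁻¹ := by rw [hS2]; group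
  have g4' : A * A * (A * A) * (B * B) * A⁻¹ * A⁻¹ * B * (B * A⁻¹ * B⁻¹ * B⁻¹)
      = B * B * (A * A * B * A⁻¹) * B⁻¹ := by
    rw [← hSS, ← hSinv, ← hS1]; exact g4
  have g4b : A * A * (A * A) * (B * B) * A⁻¹ * A⁻¹ * (B * B) * A⁻¹
      = B * B * (A * A) * B * A⁻¹ * B := by
    calc A * A * (A * A) * (B * B) * A⁻¹ * A⁻¹ * (B * B) * A⁻¹
        = (A * A * (A * A) * (B * B) * A⁻¹ * A⁻¹ * B * (B * A⁻¹ * B⁻¹ * B⁻¹)) * (B * B) := by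
          group
      _ = (B * B * (A * A * B * A⁻¹) * B⁻¹) * (B * B) := by rw [g4']
      _ = B * B * (A * A) * B * A⁻¹ * B := by group
  have g4c : A * A * (A * A) * (B * B) * A⁻¹ * A⁻¹ * (B * B) * A⁻¹
      = A * A * (A * A) * B * A⁻¹ * A⁻¹ * B * (B * A⁻¹ * B) := by
    calc A * A * (A * A) * (B * B) * A⁻¹ * A⁻¹ * (B * B) * A⁻¹
        = B * B * (A * A) * B * A⁻¹ * B := g4b
      _ = (B * B * (A * A)) * (B * A⁻¹ * B) := by group
      _ = (A * A * (A * A) * B * A⁻¹ * A⁻¹ * B) * (B * A⁻¹ * B) := by rw [← h2]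
      _ = A * A * (A * A) * B * A⁻¹ * A⁻¹ * B * (B * A⁻¹ * B) := by group
  have hiv : B * (A⁻¹ * A⁻¹ * (B * B) * A⁻¹) = (A⁻¹ * A⁻¹ * (B * B) * A⁻¹) * B := by
    apply mul_left_cancel (a := B)
    apply mul_left_cancel (a := A * A * (A * A))
    calc A * A * (A * A) * (B * (B * (A⁻¹ * A⁻¹ * (B * B) * A⁻¹)))
        = A * A * (A * A) * (B * B) * A⁻¹ * A⁻¹ * (B * B) * A⁻¹ := by group
      _ = A * A * (A * A) * B * A⁻¹ * A⁻¹ * B * (B * A⁻¹ * B) := g4c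
      _ = A * A * (A * A) * (B * ((A⁻¹ * A⁻¹ * (B * B) * A⁻¹) * B)) := by group
  have halpha : A * A * (B * (A⁻¹ * A⁻¹ * (B * B))) = B * B * A⁻¹ * B * A := by
    calc A * A * (B * (A⁻¹ * A⁻¹ * (B * B)))
        = A * A * ((B * (A⁻¹ * A⁻¹ * (B * B) * A⁻¹)) * A) := by group
      _ = A * A * (((A⁻¹ * A⁻¹ * (B * B) * A⁻¹) * B) * A) := by rw [hiv]
      _ = B * B * A⁻¹ * B * A := by group
  have hbeta : B * A⁻¹ * B * A * B = A * A * (B * (A⁻¹ * A⁻¹ * (B * B))) := by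
    calc B * A⁻¹ * B * A * B = (B * A⁻¹ * B * A) * B := by group
      _ = (A * A * B * A⁻¹ * A⁻¹ * B) * B := by rw [hiii]
      _ = A * A * (B * (A⁻¹ * A⁻¹ * (B * B))) := by group
  have hv' : B * A⁻¹ * B * A * B = B * B * A⁻¹ * B * A := hbeta.trans halpha
  have hv2 : A⁻¹ * B * A * B = B * A⁻¹ * B * A := by
    apply mul_left_cancel (a := B)
    calc B * (A⁻¹ * B * A * B) = B * A⁻¹ * B * A * B := by group
      _ = B * B * A⁻¹ * B * A := hv'
      _ = B * (B * A⁻¹ * B * A) := by group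
  calc B * (A⁻¹ * B * A) = B * A⁻¹ * B * A := by group
    _ = A⁻¹ * B * A * B := hv2.symm
    _ = (A⁻¹ * B * A) * B := by group

lemma gvi (A B S : G) (e1 : S * A = A * A * B)
    (hv : S * (A⁻¹ * S * A) = (A⁻¹ * S * A) * S) :
    A * (B * B) * A = B * (A * A) * B := by
  have hS1 : S = A * A * B * A⁻¹ := by rw [← e1]; group
  have h1 : A⁻¹ * S * A = A * B := by rw [hS1]; group
  rw [h1, hS1] at hv
  apply mul_left_cancel (a := A)
  apply mul_right_cancel (b := A⁻¹)
  calc A * (A * (B * B) * A) * A⁻¹ = (A * A * B * A⁻¹) * (A * B) := by group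
    _ = (A * B) * (A * A * B * A⁻¹) := hv
    _ = A * (B * (A * A) * B) * A⁻¹ := by group

lemma gfin (A B S : G) (e1 : S * A = A * A * B)
    (e3 : S * S * (A * A) = A * A * (A * A) * (B * B))
    (hvi : A * (S * S) * A = S * (A * A) * S) :
    A * A * A * B = B * (A * A * A) := by
  have hS1 : S = A * A * B * A⁻¹ := by rw [← e1]; group
  have hSS : S * S = A * A * (A * A) * (B * B) * A⁻¹ * A⁻¹ := by rw [← e3]; group
  rw [hSS, hS1] at hvi
  apply mul_right_cancel (b := B)
  apply mul_left_cancel (a := A * A)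
  calc A * A * (A * A * A * B * B)
      = (A * (A * A * (A * A) * (B * B) * A⁻¹ * A⁻¹) * A) * A := by group
    _ = ((A * A * B * A⁻¹) * (A * A) * (A * A * B * A⁻¹)) * A := by rw [hvi]
    _ = A * A * (B * (A * A * A) * B) := by group

end GroupLemmas

variable {Q : Type u} [Loop Q]

lemma LPsq {a : Q} (ha : a ∈ moufangCenter Q) : LP a * LP a = LP (a + a) := by
  apply Equiv.ext; intro z
  show a + (a + z) = (a + a) + z
  exact Ksq ha z

lemma LP_star {a : Q} (ha : a ∈ moufangCenter Q) (x : Q) :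
    LP (a + x) * LP a = LP a * LP a * LP x := by
  apply Equiv.ext; intro z
  show (a + x) + (a + z) = a + (a + (x + z))
  rw [Ksq ha (x + z), Kid ha x z]

variable (hNK : ∀ a : Q, ∃ n ∈ nucleus Q, ∃ k ∈ moufangCenter Q, a = n + k)

include hNK in
lemma op_e3 {a b : Q} (ha : a ∈ moufangCenter Q) (hb : b ∈ moufangCenter Q) :
    LP (a+b) * LP (a+b) * (LP a * LP a) = LP a * LP a * (LP a * LP a) * (LP b * LP b) := by
  have hs := K_add hNK ha hb
  have ha2 := K_add hNK ha ha
  have h1 : LP (a+b) * LP (a+b) = LP ((a+a) + (b+b)) := by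
    rw [LPsq hs]
    congr 1
    exact (Kid ha b b).symm
  rw [h1]
  have h2 := LP_star ha2 (b+b)
  rw [← LPsq ha, ← LPsq hb] at h2
  exact h2

include hNK in
lemma op_v {a b : Q} (ha : a ∈ moufangCenter Q) (hb : b ∈ moufangCenter Q) :
    LP b * ((LP a)⁻¹ * LP b * LP a) = ((LP a)⁻¹ * LP b * LP a) * LP b := by
  have hs := K_add hNK ha hb
  have ha2 := K_add hNK ha ha
  apply gv (LP a) (LP b) (LP (a+b)) (LP ((a+a)+b)) (LP ((a+b)+b))
  · exact LP_star ha b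
  · have h := LP_star hb a; rw [Kcomm hb a] at h; exact h
  · exact op_e3 hNK ha hb
  · have h := LP_star ha2 b; rw [← LPsq ha] at h; exact h
  · have h := LP_star hb (a+a); rw [Kcomm hb (a+a), ← LPsq ha] at h; exact h
  · exact LP_star hs b
  · have h := LP_star hb (a+b); rw [Kcomm hb (a+b)] at h; exact h

include hNK in
lemma op_vi {a b : Q} (ha : a ∈ moufangCenter Q) (hb : b ∈ moufangCenter Q) :
    LP a * (LP b * LP b) * LP a = LP b * (LP a * LP a) * LP b := by
  have hs := K_add hNK ha hb
  exact gvi (LP a) (LP b) (LP (a+b)) (LP_star ha b) (op_v hNK ha hs)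

include hNK in
lemma op_fin {a b : Q} (ha : a ∈ moufangCenter Q) (hb : b ∈ moufangCenter Q) :
    LP a * LP a * LP a * LP b = LP b * (LP a * LP a * LP a) := by
  have hs := K_add hNK ha hb
  exact gfin (LP a) (LP b) (LP (a+b)) (LP_star ha b) (op_e3 hNK ha hb) (op_vi hNK ha hs)

include hNK in
lemma K_moufang {a b : Q} (ha : a ∈ moufangCenter Q) (hb : b ∈ moufangCenter Q) (z : Q) :
    a + (b + (a + z)) = ((a + b) + a) + z := by
  have hs := K_add hNK ha hb
  have h : LP ((a+b)+a) = LP a * LP b * LP a := by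
    have h1 : (a+b)+a = (a+a)+b := by
      rw [Kcomm hs a]
      exact Ksq ha b
    rw [h1]
    apply mul_right_cancel (b := LP a * LP a)
    have h2 := LP_star (K_add hNK ha ha) b
    rw [← LPsq ha] at h2
    rw [h2]
    calc LP a * LP a * (LP a * LP a) * LP b = LP a * (LP a * LP a * LP a * LP b) := by group
      _ = LP a * (LP b * (LP a * LP a * LP a)) := by rw [op_fin hNK ha hb]
      _ = LP a * LP b * LP a * (LP a * LP a) := by group
  have hz := congrArg (fun e : Equiv.Perm Q => e z) h
  exact (hz : ((a+b)+a) + z = a + (b + (a + z))).symm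

lemma P_formula {n n' k : Q} (hn : n ∈ nucleus Q) (hn' : n' ∈ nucleus Q)
    (hc : ∀ x, k + x = x + k) (w : Q) :
    (n + k) + (n' + w) = (n + n') + (k + w) := by
  calc (n + k) + (n' + w) = n + (k + (n' + w)) := nuc1 hn k (n'+w)
    _ = n + ((k + n') + w) := by rw [nuc2 hn' k w]
    _ = n + ((n' + k) + w) := by rw [hc n']
    _ = n + (n' + (k + w)) := by rw [nuc1 hn' k w]
    _ = (n + n') + (k + w) := (nuc1 hn n' (k+w)).symm

include hNK in
theorem moufang : IsMoufang Q := by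
  intro x y z
  obtain ⟨n1, hn1, k1, hk1, hx⟩ := hNK x
  obtain ⟨n2, hn2, k2, hk2, hy⟩ := hNK y
  subst hx hy
  have c1 : ∀ t, k1 + t = t + k1 := fun t => Kcomm hk1 t
  have c2 : ∀ t, k2 + t = t + k2 := fun t => Kcomm hk2 t
  have c12 : ∀ t, (k1+k2) + t = t + (k1+k2) := fun t => Kcomm (K_add hNK hk1 hk2) t
  calc (n1+k1) + ((n2+k2) + ((n1+k1) + z))
      = (n1+k1) + ((n2+k2) + (n1 + (k1 + z))) := by rw [nuc1 hn1 k1 z]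
    _ = (n1+k1) + ((n2+n1) + (k2 + (k1 + z))) := by rw [P_formula hn2 hn1 c2 (k1+z)]
    _ = (n1+(n2+n1)) + (k1 + (k2 + (k1 + z))) := P_formula hn1 (nuc_add hn2 hn1) c1 _
    _ = ((n1+n2)+n1) + (k1 + (k2 + (k1 + z))) := by rw [← nuc1 hn1 n2 n1]
    _ = ((n1+n2)+n1) + (((k1+k2)+k1) + z) := by rw [K_moufang hNK hk1 hk2 z]
    _ = (((n1+n2)+n1) + ((k1+k2)+k1)) + z := (nuc1 (nuc_add (nuc_add hn1 hn2) hn1) _ z).symm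
    _ = (((n1+k1) + (n2+k2)) + (n1+k1)) + z := by
        rw [P_formula hn1 hn2 c1 k2, P_formula (nuc_add hn1 hn2) hn1 c12 k1]

end NKProof
namespace NKProof

variable {Q : Type u} [Loop Q]

/-- additive permutation -/
def Add1 (J : Equiv.Perm Q) : Prop := ∀ x y : Q, J (x + y) = J x + J y

lemma Add1.one : Add1 (1 : Equiv.Perm Q) := fun _ _ => rfl

lemma Add1.mul {f g : Equiv.Perm Q} (hf : Add1 f) (hg : Add1 g) : Add1 (f * g) := by
  intro x y
  show f (g (x+y)) = f (g x) + f (g y)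
  rw [hg, hf]

lemma Add1.inv {f : Equiv.Perm Q} (hf : Add1 f) : Add1 f⁻¹ := by
  intro x y
  apply f.injective
  rw [hf]
  simp only [← Equiv.Perm.mul_apply, mul_inv_cancel, Equiv.Perm.one_apply]

lemma Add1.zero {f : Equiv.Perm Q} (hf : Add1 f) : f 0 = 0 := by
  apply left_cancel (a := f 0)
  rw [← hf 0 0, zadd, addz]

lemma Add1.presN {f : Equiv.Perm Q} (hf : Add1 f) {n : Q} (hn : n ∈ nucleus Q) :
    f n ∈ nucleus Q := by
  intro x y
  obtain ⟨u, rfl⟩ : ∃ u, f u = x := ⟨f.symm x, f.apply_symm_apply x⟩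
  obtain ⟨v, rfl⟩ : ∃ v, f v = y := ⟨f.symm y, f.apply_symm_apply y⟩
  refine ⟨?_, ?_, ?_⟩
  · rw [← hf n u, ← hf (n+u) v, nuc1 hn u v, hf n (u+v), hf u v]
  · rw [← hf u n, ← hf (u+n) v, nuc2 hn u v, hf u (n+v), hf n v]
  · rw [← hf u v, ← hf (u+v) n, nuc3 hn u v, hf u (v+n), hf v n]

lemma Add1.presK {f : Equiv.Perm Q} (hf : Add1 f) {k : Q} (hk : k ∈ moufangCenter Q) :
    f k ∈ moufangCenter Q := by
  intro x y
  obtain ⟨u, rfl⟩ : ∃ u, f u = x := ⟨f.symm x, f.apply_symm_apply x⟩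
  obtain ⟨v, rfl⟩ : ∃ v, f v = y := ⟨f.symm y, f.apply_symm_apply y⟩
  rw [← hf k k, ← hf u v, ← hf (k+k) (u+v), Kid hk u v, hf (k+u) (k+v), hf k u, hf k v]

/-- defining property of the inner map ι -/
lemma iota_prop (c d t : Q) :
    (c + d) + (((LP (c+d))⁻¹ * (LP c * LP d)) t) = c + (d + t) := by
  show LP (c+d) ((LP (c+d))⁻¹ ((LP c * LP d) t)) = c + (d + t)
  rw [← Equiv.Perm.mul_apply, mul_inv_cancel, Equiv.Perm.one_apply]
  rfl

variable (hNK : ∀ a : Q, ∃ n ∈ nucleus Q, ∃ k ∈ moufangCenter Q, a = n + k)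

include hNK in
/-- the crucial lemma: inner mappings from Moufang-center translations are additive -/
lemma iota_add1 {a b : Q} (ha : a ∈ moufangCenter Q) (hb : b ∈ moufangCenter Q) :
    Add1 ((LP (a+b))⁻¹ * (LP a * LP b)) := by
  intro x y
  have hs : a + b ∈ moufangCenter Q := K_add hNK ha hb
  set ι : Equiv.Perm Q := (LP (a+b))⁻¹ * (LP a * LP b) with hι
  have hu := iota_prop a b x
  have hv := iota_prop a b y
  have hw := iota_prop a b (x + y)
  rw [← hι] at hu hv hw
  have h1 : (a+b) + ((a+b) + (ι x + ι y)) = (a+a) + ((b+b) + (x+y)) := by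
    calc (a+b) + ((a+b) + (ι x + ι y)) = ((a+b) + (a+b)) + (ι x + ι y) := Ksq hs _
      _ = ((a+b) + ι x) + ((a+b) + ι y) := Kid hs _ _
      _ = (a + (b + x)) + (a + (b + y)) := by rw [hu, hv]
      _ = (a+a) + ((b + x) + (b + y)) := (Kid ha _ _).symm
      _ = (a+a) + ((b+b) + (x+y)) := by rw [← Kid hb x y]
  have h2 : (a+b) + ((a+b) + ι (x+y)) = (a+a) + ((b+b) + (x+y)) := by
    calc (a+b) + ((a+b) + ι (x+y)) = (a+b) + (a + (b + (x+y))) := by rw [hw]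
      _ = (a+a) + (b + (b + (x+y))) := (Kid ha b (b+(x+y))).symm
      _ = (a+a) + ((b+b) + (x+y)) := by rw [Ksq hb]
  exact left_cancel (left_cancel (h2.trans h1.symm))

-- permutation commutation lemmas
lemma LP_zero : LP (0 : Q) = 1 := Equiv.ext fun x => zadd x

lemma RP_zero : RP (0 : Q) = 1 := Equiv.ext fun x => addz x

lemma LPN_mul {n m : Q} (hn : n ∈ nucleus Q) : LP n * LP m = LP (n + m) :=
  Equiv.ext fun x => (nuc1 hn m x).symm

lemma RPN_mul {n m : Q} (hn : n ∈ nucleus Q) : RP n * RP m = RP (m + n) :=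
  Equiv.ext fun x => nuc3 hn x m

lemma LP_RP_comm {n : Q} (hn : n ∈ nucleus Q) (m : Q) : LP n * RP m = RP m * LP n :=
  Equiv.ext fun x => (nuc1 hn x m).symm

lemma LPC_LPN_comm {c n : Q} (hc : ∀ x, c + x = x + c) (hn : n ∈ nucleus Q) :
    LP c * LP n = LP n * LP c := by
  apply Equiv.ext; intro x
  show c + (n + x) = n + (c + x)
  rw [← nuc2 hn c x, hc n, nuc1 hn c x]

lemma LPC_RPN_comm (c : Q) {n : Q} (hn : n ∈ nucleus Q) :
    LP c * RP n = RP n * LP c := by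
  apply Equiv.ext; intro x
  show c + (x + n) = (c + x) + n
  exact (nuc3 hn c x).symm

lemma Add1.conjL {J : Equiv.Perm Q} (hJ : Add1 J) (x : Q) : J * LP x = LP (J x) * J :=
  Equiv.ext fun t => hJ x t

lemma Add1.conjR {J : Equiv.Perm Q} (hJ : Add1 J) (x : Q) : J * RP x = RP (J x) * J :=
  Equiv.ext fun t => hJ t x

lemma LP_inv_N {n m : Q} (hn : n ∈ nucleus Q) (h1 : n + m = 0) (h2 : m + n = 0) :
    (LP n)⁻¹ = LP m := by
  apply inv_eq_of_mul_eq_one_right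
  rw [LPN_mul hn, h1, LP_zero]

lemma RP_inv_N {n m : Q} (hn : n ∈ nucleus Q) (hm : m ∈ nucleus Q)
    (h1 : n + m = 0) (h2 : m + n = 0) : (RP n)⁻¹ = RP m := by
  apply inv_eq_of_mul_eq_one_right
  rw [RPN_mul hn, h2, RP_zero]

end NKProof
namespace NKProof

variable {Q : Type u} [Loop Q]

lemma comm_nuc_swap {c n : Q} (hc : ∀ x, c + x = x + c) (hn : n ∈ nucleus Q) (w : Q) :
    c + (n + w) = n + (c + w) := by
  rw [← nuc2 hn c w, hc n, nuc1 hn c w]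

/-- normal form for elements of the multiplication group of an NK-loop -/
def Good (φ : Equiv.Perm Q) : Prop :=
  ∃ n ∈ nucleus Q, ∃ m ∈ nucleus Q, ∃ c ∈ moufangCenter Q, ∃ J : Equiv.Perm Q,
    Add1 J ∧ φ = LP n * RP m * LP c * J

variable (hNK : ∀ a : Q, ∃ n ∈ nucleus Q, ∃ k ∈ moufangCenter Q, a = n + k)

include hNK in
lemma good_LP (a : Q) : Good (LP a) := by
  obtain ⟨n, hn, k, hk, rfl⟩ := hNK a
  refine ⟨n, hn, 0, zero_mem_nuc, k, hk, 1, Add1.one, ?_⟩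
  rw [RP_zero, mul_one, mul_one]
  apply Equiv.ext; intro x
  show (n + k) + x = n + (k + x)
  exact nuc1 hn k x

include hNK in
lemma good_RP (a : Q) : Good (RP a) := by
  obtain ⟨n, hn, k, hk, rfl⟩ := hNK a
  refine ⟨0, zero_mem_nuc, n, hn, k, hk, 1, Add1.one, ?_⟩
  rw [LP_zero, one_mul, mul_one]
  apply Equiv.ext; intro x
  show x + (n + k) = (k + x) + n
  calc x + (n + k) = (x + n) + k := (nuc2 hn x k).symm
    _ = k + (x + n) := (Kcomm hk (x+n)).symm
    _ = (k + x) + n := (nuc3 hn k x).symm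

lemma good_one : Good (1 : Equiv.Perm Q) :=
  ⟨0, zero_mem_nuc, 0, zero_mem_nuc, 0, zero_mem_K, 1, Add1.one, by
    rw [LP_zero, RP_zero, one_mul, one_mul, one_mul]⟩

include hNK in
lemma good_mul {φ₁ φ₂ : Equiv.Perm Q} (h1 : Good φ₁) (h2 : Good φ₂) : Good (φ₁ * φ₂) := by
  obtain ⟨n₁, hn₁, m₁, hm₁, c₁, hc₁, J₁, hJ₁, rfl⟩ := h1
  obtain ⟨n₂, hn₂, m₂, hm₂, c₂, hc₂, J₂, hJ₂, rfl⟩ := h2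
  have hna : J₁ n₂ ∈ nucleus Q := hJ₁.presN hn₂
  have hma : J₁ m₂ ∈ nucleus Q := hJ₁.presN hm₂
  have hca : J₁ c₂ ∈ moufangCenter Q := hJ₁.presK hc₂
  have hcomm1 : ∀ x, c₁ + x = x + c₁ := fun x => Kcomm hc₁ x
  refine ⟨n₁ + J₁ n₂, nuc_add hn₁ hna, J₁ m₂ + m₁, nuc_add hma hm₁,
    c₁ + J₁ c₂, K_add hNK hc₁ hca,
    ((LP (c₁ + J₁ c₂))⁻¹ * (LP c₁ * LP (J₁ c₂))) * (J₁ * J₂),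
    Add1.mul (iota_add1 hNK hc₁ hca) (Add1.mul hJ₁ hJ₂), ?_⟩
  calc (LP n₁ * RP m₁ * LP c₁ * J₁) * (LP n₂ * RP m₂ * LP c₂ * J₂)
      = LP n₁ * RP m₁ * LP c₁ * ((J₁ * LP n₂) * (RP m₂ * (LP c₂ * J₂))) := by group
    _ = LP n₁ * RP m₁ * LP c₁ * ((LP (J₁ n₂) * J₁) * (RP m₂ * (LP c₂ * J₂))) := by
        rw [hJ₁.conjL n₂]
    _ = LP n₁ * RP m₁ * LP c₁ * (LP (J₁ n₂) * ((J₁ * RP m₂) * (LP c₂ * J₂))) := by group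
    _ = LP n₁ * RP m₁ * LP c₁ * (LP (J₁ n₂) * ((RP (J₁ m₂) * J₁) * (LP c₂ * J₂))) := by
        rw [hJ₁.conjR m₂]
    _ = LP n₁ * RP m₁ * LP c₁ * (LP (J₁ n₂) * (RP (J₁ m₂) * ((J₁ * LP c₂) * J₂))) := by group
    _ = LP n₁ * RP m₁ * LP c₁ * (LP (J₁ n₂) * (RP (J₁ m₂) * ((LP (J₁ c₂) * J₁) * J₂))) := by
        rw [hJ₁.conjL c₂]
    _ = LP n₁ * RP m₁ * ((LP c₁ * LP (J₁ n₂)) * (RP (J₁ m₂) * (LP (J₁ c₂) * (J₁ * J₂)))) := by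
        group
    _ = LP n₁ * RP m₁ * ((LP (J₁ n₂) * LP c₁) * (RP (J₁ m₂) * (LP (J₁ c₂) * (J₁ * J₂)))) := by
        rw [LPC_LPN_comm hcomm1 hna]
    _ = LP n₁ * ((RP m₁ * LP (J₁ n₂)) * ((LP c₁ * RP (J₁ m₂)) * (LP (J₁ c₂) * (J₁ * J₂)))) := by
        group
    _ = LP n₁ * ((LP (J₁ n₂) * RP m₁) * ((RP (J₁ m₂) * LP c₁) * (LP (J₁ c₂) * (J₁ * J₂)))) := by
        rw [← LP_RP_comm hna m₁, LPC_RPN_comm c₁ hma]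
    _ = (LP n₁ * LP (J₁ n₂)) * ((RP m₁ * RP (J₁ m₂)) * ((LP c₁ * LP (J₁ c₂)) * (J₁ * J₂))) := by
        group
    _ = LP (n₁ + J₁ n₂) * (RP (J₁ m₂ + m₁) * ((LP c₁ * LP (J₁ c₂)) * (J₁ * J₂))) := by
        rw [LPN_mul hn₁, RPN_mul hm₁]
    _ = LP (n₁ + J₁ n₂) * (RP (J₁ m₂ + m₁) *
          ((LP (c₁ + J₁ c₂) * ((LP (c₁ + J₁ c₂))⁻¹ * (LP c₁ * LP (J₁ c₂)))) * (J₁ * J₂))) := by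
        group
    _ = LP (n₁ + J₁ n₂) * RP (J₁ m₂ + m₁) * LP (c₁ + J₁ c₂) *
          (((LP (c₁ + J₁ c₂))⁻¹ * (LP c₁ * LP (J₁ c₂))) * (J₁ * J₂)) := by group

include hNK in
lemma good_inv {φ : Equiv.Perm Q} (h : Good φ) : Good φ⁻¹ := by
  obtain ⟨n, hn, m, hm, c, hc, J, hJ, rfl⟩ := h
  obtain ⟨n', hn', hnn', hn'n⟩ := nuc_inv hn
  obtain ⟨m', hm', hmm', hm'm⟩ := nuc_inv hm
  obtain ⟨cs, hcs⟩ := exists_left_div c 0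
  have hcs' : cs ∈ moufangCenter Q := K_div hNK hc zero_mem_K hcs
  have hE : Add1 (LP c * LP cs) := by
    have h := iota_add1 hNK hc hcs'
    rw [hcs, LP_zero, inv_one, one_mul] at h
    exact h
  have hEi : Add1 (LP c * LP cs)⁻¹ := hE.inv
  have hJi : Add1 J⁻¹ := hJ.inv
  have hn₀ : J⁻¹ ((LP c * LP cs)⁻¹ n') ∈ nucleus Q := hJi.presN (hEi.presN hn')
  have hm₀ : J⁻¹ ((LP c * LP cs)⁻¹ m') ∈ nucleus Q := hJi.presN (hEi.presN hm')
  have hc₀ : J⁻¹ cs ∈ moufangCenter Q := hJi.presK hcs'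
  refine ⟨J⁻¹ ((LP c * LP cs)⁻¹ n'), hn₀, J⁻¹ ((LP c * LP cs)⁻¹ m'), hm₀,
    J⁻¹ cs, hc₀, J⁻¹ * (LP c * LP cs)⁻¹, Add1.mul hJi hEi, ?_⟩
  calc (LP n * RP m * LP c * J)⁻¹
      = J⁻¹ * ((LP c)⁻¹ * ((RP m)⁻¹ * (LP n)⁻¹)) := by group
    _ = J⁻¹ * ((LP c)⁻¹ * (RP m' * LP n')) := by
        rw [RP_inv_N hm hm' hmm' hm'm, LP_inv_N hn hnn' hn'n]
    _ = J⁻¹ * (LP cs * (((LP c * LP cs)⁻¹ * RP m') * LP n')) := by group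
    _ = J⁻¹ * (LP cs * ((RP ((LP c * LP cs)⁻¹ m') * (LP c * LP cs)⁻¹) * LP n')) := by
        rw [hEi.conjR m']
    _ = J⁻¹ * (LP cs * (RP ((LP c * LP cs)⁻¹ m') * ((LP c * LP cs)⁻¹ * LP n'))) := by group
    _ = J⁻¹ * (LP cs * (RP ((LP c * LP cs)⁻¹ m') *
          (LP ((LP c * LP cs)⁻¹ n') * (LP c * LP cs)⁻¹))) := by rw [hEi.conjL n']
    _ = (J⁻¹ * LP cs) * (RP ((LP c * LP cs)⁻¹ m') *
          (LP ((LP c * LP cs)⁻¹ n') * (LP c * LP cs)⁻¹)) := by group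
    _ = (LP (J⁻¹ cs) * J⁻¹) * (RP ((LP c * LP cs)⁻¹ m') *
          (LP ((LP c * LP cs)⁻¹ n') * (LP c * LP cs)⁻¹)) := by rw [hJi.conjL cs]
    _ = LP (J⁻¹ cs) * ((J⁻¹ * RP ((LP c * LP cs)⁻¹ m')) *
          (LP ((LP c * LP cs)⁻¹ n') * (LP c * LP cs)⁻¹)) := by group
    _ = LP (J⁻¹ cs) * ((RP (J⁻¹ ((LP c * LP cs)⁻¹ m')) * J⁻¹) *
          (LP ((LP c * LP cs)⁻¹ n') * (LP c * LP cs)⁻¹)) := by rw [hJi.conjR]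
    _ = LP (J⁻¹ cs) * (RP (J⁻¹ ((LP c * LP cs)⁻¹ m')) *
          ((J⁻¹ * LP ((LP c * LP cs)⁻¹ n')) * (LP c * LP cs)⁻¹)) := by group
    _ = LP (J⁻¹ cs) * (RP (J⁻¹ ((LP c * LP cs)⁻¹ m')) *
          ((LP (J⁻¹ ((LP c * LP cs)⁻¹ n')) * J⁻¹) * (LP c * LP cs)⁻¹)) := by rw [hJi.conjL]
    _ = (LP (J⁻¹ cs) * RP (J⁻¹ ((LP c * LP cs)⁻¹ m'))) *
          (LP (J⁻¹ ((LP c * LP cs)⁻¹ n')) * (J⁻¹ * (LP c * LP cs)⁻¹)) := by group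
    _ = (RP (J⁻¹ ((LP c * LP cs)⁻¹ m')) * LP (J⁻¹ cs)) *
          (LP (J⁻¹ ((LP c * LP cs)⁻¹ n')) * (J⁻¹ * (LP c * LP cs)⁻¹)) := by
        rw [LPC_RPN_comm (J⁻¹ cs) hm₀]
    _ = RP (J⁻¹ ((LP c * LP cs)⁻¹ m')) * ((LP (J⁻¹ cs) * LP (J⁻¹ ((LP c * LP cs)⁻¹ n'))) *
          (J⁻¹ * (LP c * LP cs)⁻¹)) := by group
    _ = RP (J⁻¹ ((LP c * LP cs)⁻¹ m')) * ((LP (J⁻¹ ((LP c * LP cs)⁻¹ n')) * LP (J⁻¹ cs)) *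
          (J⁻¹ * (LP c * LP cs)⁻¹)) := by
        rw [LPC_LPN_comm (fun x => Kcomm hc₀ x) hn₀]
    _ = (RP (J⁻¹ ((LP c * LP cs)⁻¹ m')) * LP (J⁻¹ ((LP c * LP cs)⁻¹ n'))) *
          (LP (J⁻¹ cs) * (J⁻¹ * (LP c * LP cs)⁻¹)) := by group
    _ = (LP (J⁻¹ ((LP c * LP cs)⁻¹ n')) * RP (J⁻¹ ((LP c * LP cs)⁻¹ m'))) *
          (LP (J⁻¹ cs) * (J⁻¹ * (LP c * LP cs)⁻¹)) := by
        rw [LP_RP_comm hn₀]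
    _ = LP (J⁻¹ ((LP c * LP cs)⁻¹ n')) * RP (J⁻¹ ((LP c * LP cs)⁻¹ m')) * LP (J⁻¹ cs) *
          (J⁻¹ * (LP c * LP cs)⁻¹) := by group

end NKProof
namespace NKProof

variable {Q : Type u} [Loop Q]
variable (hNK : ∀ a : Q, ∃ n ∈ nucleus Q, ∃ k ∈ moufangCenter Q, a = n + k)

include hNK in
lemma good_mlt {φ : Equiv.Perm Q} (h : φ ∈ mlt Q) : Good φ := by
  refine Subgroup.closure_induction (p := fun g _ => Good g) ?_ good_one ?_ ?_ h
  · rintro e (⟨a, he⟩ | ⟨a, he⟩)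
    · have he' : e = LP a := Equiv.ext fun x => he x
      rw [he']; exact good_LP hNK a
    · have he' : e = RP a := Equiv.ext fun x => he x
      rw [he']; exact good_RP hNK a
  · intro a b _ _ ha hb; exact good_mul hNK ha hb
  · intro a _ ha; exact good_inv hNK ha

include hNK in
theorem aloop : IsALoop Q := by
  intro φ hφ h0 x y
  obtain ⟨n, hn, m, hm, c, hc, J, hJ, rfl⟩ := good_mlt hNK hφ
  have happ : ∀ t, (LP n * RP m * LP c * J) t = n + ((c + J t) + m) := fun t => rfl
  have hq : n + (c + m) = 0 := by
    have h1 := h0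
    rw [happ 0, hJ.zero, addz] at h1
    exact h1
  have h1 : (n + m) + c = 0 := by
    calc (n + m) + c = n + (m + c) := nuc1 hn m c
      _ = n + (c + m) := by rw [← Kcomm hc m]
      _ = 0 := hq
  obtain ⟨p, hp, hp1, hp2⟩ := nuc_inv (nuc_add hn hm)
  have hcp : c = p := left_cancel (a := n + m) (h1.trans hp1.symm)
  have hcN : c ∈ nucleus Q := hcp ▸ hp
  have hg : n + c ∈ nucleus Q := nuc_add hn hcN
  have hgm : (n + c) + m = 0 := by
    rw [nuc1 hn c m]; exact hq
  have hmg : m + (n + c) = 0 := by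
    obtain ⟨q, hq', h1', h2'⟩ := nuc_inv hg
    have : m = q := left_cancel (a := n + c) (hgm.trans h1'.symm)
    rw [this]; exact h2'
  have hθ : ∀ t, n + ((c + t) + m) = ((n + c) + t) + m := fun t => by
    calc n + ((c + t) + m) = (n + (c + t)) + m := (nuc3 hm n (c+t)).symm
      _ = ((n + c) + t) + m := by rw [nuc1 hn c t]
  have key : ∀ a b : Q, ((n + c) + (a + b)) + m = (((n + c) + a) + m) + (((n + c) + b) + m) := by
    intro a b
    have hrhs : (((n + c) + a) + m) + (((n + c) + b) + m) = (n + c) + (a + (b + m)) := by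
      calc (((n + c) + a) + m) + (((n + c) + b) + m)
          = ((n + c) + a) + (m + (((n + c) + b) + m)) := nuc2 hm _ _
        _ = ((n + c) + a) + ((m + ((n + c) + b)) + m) := by rw [nuc1 hm ((n+c)+b) m]
        _ = ((n + c) + a) + (((m + (n + c)) + b) + m) := by rw [nuc1 hm (n+c) b]
        _ = ((n + c) + a) + ((0 + b) + m) := by rw [hmg]
        _ = ((n + c) + a) + (b + m) := by rw [zadd]
        _ = (n + c) + (a + (b + m)) := nuc1 hg a (b+m)
    rw [hrhs]
    calc ((n + c) + (a + b)) + m = (n + c) + ((a + b) + m) := nuc1 hg (a+b) m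
      _ = (n + c) + (a + (b + m)) := by rw [nuc3 hm a b]
  rw [happ, happ, happ, hJ x y, hθ, hθ, hθ]
  exact key (J x) (J y)

end NKProof

theorem NK_loop_is_Moufang_A_loop (Q : Type u) [Loop Q]
    (hNK : ∀ a : Q, ∃ n ∈ nucleus Q, ∃ k ∈ moufangCenter Q, a = n + k) :
    IsMoufang Q ∧ IsALoop Q :=
  ⟨NKProof.moufang hNK, NKProof.aloop hNK⟩
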